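/- Let A be an EL-chart and b_0, b_1, …, b_{dn} the associated sequence (b_0 = min B_(0), and b_{i+1} the unique element of B of the form f(b_i) − μ'_{i+1}·n with μ'_{i+1} a non-negative integer). Then the elements b_0, b_1, …, b_{dn−1} are pairwise distinct; consequently {b_0,…,b_{dn−1}} = B and b_{dn} = b_0. -/
import Mathlib


namespace ELChart

/-- An EL-chart (for parameters `d`, `n` and `mfun τ = m_τ`): a non-empty subset
`A ⊆ ℤ^(d) = (ℤ/dℤ) × ℤ` which is bounded below and satisfies `f(A) ⊆ A` and `A + n ⊆ A`,
where `f (τ, x) = (τ + 1, x + m_τ)`. -/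
def IsChart (d n : ℕ) (mfun : ZMod d → ℤ) (A : Set (ZMod d × ℤ)) : Prop :=
  A.Nonempty ∧ (∃ c : ℤ, ∀ p ∈ A, c ≤ p.2) ∧
    (∀ p ∈ A, ((p.1 + 1 : ZMod d), p.2 + mfun p.1) ∈ A) ∧
    (∀ p ∈ A, (p.1, p.2 + (n : ℤ)) ∈ A)

/-- `B = A ∖ (A + n)`. -/
def Bset (d n : ℕ) (A : Set (ZMod d × ℤ)) : Set (ZMod d × ℤ) :=
  {p | p ∈ A ∧ (p.1, p.2 - (n : ℤ)) ∉ A}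

/-- The shift `A + z` of a subset of `ℤ^(d)`. -/
def shift (d : ℕ) (A : Set (ZMod d × ℤ)) (z : ℤ) : Set (ZMod d × ℤ) :=
  (fun p : ZMod d × ℤ => (p.1, p.2 + z)) '' A

/-- Two EL-charts are equivalent if they differ by a shift. -/
def ChartEquiv (d : ℕ) (A A' : Set (ZMod d × ℤ)) : Prop :=
  ∃ z : ℤ, shift d A z = A'

/-- The sequence `b 0, b 1, …` associated with an EL-chart: `b 0 = min B_(0)` and `b (i+1)`
is the unique element of `B` of the form `f (b i) − c * n` with `c` a non-negative integer. -/
noncomputable def bseq (d n : ℕ) (mfun : ZMod d → ℤ) (A : Set (ZMod d × ℤ)) :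
    ℕ → ZMod d × ℤ
  | 0 => ((0 : ZMod d), sInf {x : ℤ | ((0 : ZMod d), x) ∈ Bset d n A})
  | i + 1 =>
    ((bseq d n mfun A i).1 + 1,
      sInf {y : ℤ | ((bseq d n mfun A i).1 + 1, y) ∈ Bset d n A ∧
        ((bseq d n mfun A i).2 + mfun (bseq d n mfun A i).1 - y) % (n : ℤ) = 0 ∧
        y ≤ (bseq d n mfun A i).2 + mfun (bseq d n mfun A i).1})

/-- The entry `μ'_k` (for `1 ≤ k ≤ d*n`) of the type of an EL-chart: the non-negative integer
with `b k = f (b (k-1)) − μ'_k * n`. -/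
noncomputable def typeInt (d n : ℕ) (mfun : ZMod d → ℤ) (A : Set (ZMod d × ℤ)) (k : ℕ) : ℤ :=
  ((bseq d n mfun A (k - 1)).2 + mfun (bseq d n mfun A (k - 1)).1
    - (bseq d n mfun A k).2) / (n : ℤ)

/-- The type of an EL-chart as a tuple: `μ'_{τ,i} = μ'_{τ + (i−1)d}` where the `Fin d`-index
`τ` corresponds to `τ + 1 ∈ {1, …, d}` and the `Fin n`-index `i` to `i + 1 ∈ {1, …, n}`. -/
noncomputable def typeTup (d n : ℕ) (mfun : ZMod d → ℤ) (A : Set (ZMod d × ℤ)) :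
    Fin d → Fin n → ℤ :=
  fun τ i => typeInt d n mfun A (τ.val + 1 + i.val * d)

/-- The entry `μ'_{τ',i'}` of the type of an EL-chart attached to an element `p = b_{τ',i'}`
of `B`: if `q ∈ B` is the (unique) predecessor of `p`, i.e. the element with
`p = f q − c * n` for a non-negative integer `c`, then `muOf p = c`. -/
noncomputable def muOf (d n : ℕ) (mfun : ZMod d → ℤ) (A : Set (ZMod d × ℤ))
    (p : ZMod d × ℤ) : ℤ :=
  (sInf {y : ℤ | ((p.1 - 1 : ZMod d), y) ∈ Bset d n A ∧
      (y + mfun (p.1 - 1) - p.2) % (n : ℤ) = 0 ∧ p.2 ≤ y + mfun (p.1 - 1)}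
    + mfun (p.1 - 1) - p.2) / (n : ℤ)

/-- The `i`-th largest element `b̃_{τ,i}` of `B_(τ)` (1-indexed: `i ∈ {1, …, n}`): the unique
element of `B_(τ)` with exactly `i − 1` elements of `B_(τ)` above it. -/
noncomputable def btilde (d n : ℕ) (A : Set (ZMod d × ℤ)) (τ : ZMod d) (i : ℕ) : ℤ :=
  sInf {y : ℤ | (τ, y) ∈ Bset d n A ∧
    Set.ncard {z : ℤ | (τ, z) ∈ Bset d n A ∧ y < z} = i - 1}

/-- The cotype of an EL-chart as a tuple: `μ̃_{τ,i} = μ'_{τ',i'}` where `b̃_{τ,i} = b_{τ',i'}`,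
i.e. the type entry attached to the `i`-th largest element of `B_(τ)`. -/
noncomputable def cotypeTup (d n : ℕ) (mfun : ZMod d → ℤ) (A : Set (ZMod d × ℤ)) :
    Fin d → Fin n → ℤ :=
  fun τ i =>
    muOf d n mfun A (((τ.val + 1 : ℕ) : ZMod d),
      btilde d n A ((τ.val + 1 : ℕ) : ZMod d) (i.val + 1))

/-- Membership in `P_{m,n,d}`: all entries are non-negative and
`Σ_{i=1}^k Σ_{τ=1}^d μ_{τ,i} ≤ k*m/n` for `k = 1, …, n`, with equality for `k = n`. -/
def memP (d n m : ℕ) (μ : Fin d → Fin n → ℤ) : Prop :=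
  (∀ τ i, 0 ≤ μ τ i) ∧
    (∀ k : ℕ, 1 ≤ k → k ≤ n →
      (n : ℤ) * ∑ τ : Fin d, ∑ i : Fin n, (if i.val + 1 ≤ k then μ τ i else 0)
        ≤ (k : ℤ) * (m : ℤ)) ∧
    (∑ τ : Fin d, ∑ i : Fin n, μ τ i) = (m : ℤ)

/-- An EL-chart is normalised if `Σ_{b ∈ B_(0)} |b| = n(n−1)/2`. -/
def IsNormalised (d n : ℕ) (A : Set (ZMod d × ℤ)) : Prop :=
  ∑ᶠ x ∈ {x : ℤ | ((0 : ZMod d), x) ∈ Bset d n A}, x = ((n * (n - 1) / 2 : ℕ) : ℤ)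

/-- The dominant rearrangement of a tuple: each component is sorted weakly decreasingly. -/
def domOf (d n : ℕ) (μ : Fin d → Fin n → ℤ) : Fin d → Fin n → ℤ :=
  fun τ i => μ τ (Tuple.sort (fun j => -(μ τ j)) i)

/-- A tuple is dominant if each of its `d` components is weakly decreasing. -/
def IsDom (d n : ℕ) (μ : Fin d → Fin n → ℤ) : Prop :=
  ∀ τ : Fin d, ∀ i j : Fin n, i ≤ j → μ τ j ≤ μ τ i

end ELChart

open ELChart

/-- Let `A` be an EL-chart and `b 0, b 1, …, b (d*n)` the associated sequence
(`b 0 = min B_(0)`, and `b (i+1)` the unique element of `B` of the form `f (b i) − c * n` with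
`c` a non-negative integer).  Then `b 0, …, b (d*n − 1)` are pairwise distinct; consequently
`{b 0, …, b (d*n − 1)} = B` and `b (d*n) = b 0`. -/
theorem bseq_injective_and_exhausts
    (d n m : ℕ) [NeZero d] (hn : 0 < n) (hm : 0 < m) (hmn : Nat.Coprime m n)
    (mfun : ZMod d → ℤ) (hsum : ∑ τ : ZMod d, mfun τ = (m : ℤ))
    (A : Set (ZMod d × ℤ)) (hA : IsChart d n mfun A)
    (b : ℕ → ZMod d × ℤ)
    (hb0mem : b 0 ∈ Bset d n A) (hb0cls : (b 0).1 = 0)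
    (hb0min : ∀ x : ℤ, ((0 : ZMod d), x) ∈ Bset d n A → (b 0).2 ≤ x)
    (hrec : ∀ i : ℕ, b (i + 1) ∈ Bset d n A ∧
      ∃ c : ℕ, b (i + 1) = ((b i).1 + 1, (b i).2 + mfun (b i).1 - (c : ℤ) * (n : ℤ))) :
    (∀ i j : ℕ, i < d * n → j < d * n → b i = b j → i = j) ∧
    {p : ZMod d × ℤ | ∃ i : ℕ, i < d * n ∧ b i = p} = Bset d n A ∧
    b (d * n) = b 0 := by
    classical
  obtain ⟨hAne, ⟨c0, hc0⟩, hf, hplus⟩ := hA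
  have hd : 0 < d := Nat.pos_of_ne_zero (NeZero.ne d)
  haveI : NeZero n := ⟨hn.ne'⟩
  -- A is closed under adding k*n
  have haddn : ∀ p ∈ A, ∀ k : ℕ, (p.1, p.2 + (k : ℤ) * n) ∈ A := by
    intro p hp k
    induction k with
    | zero => simpa using hp
    | succ k ih =>
      have := hplus _ ih
      simp only at this
      have hh : p.2 + (k : ℤ) * n + (n : ℤ) = p.2 + ((k : ℕ) + 1 : ℤ) * n := by ring
      rw [hh] at this
      push_cast
      push_cast at this
      exact this
  -- uniqueness mod n in each class of B
  have huniq : ∀ τ : ZMod d, ∀ x y : ℤ, (τ, x) ∈ Bset d n A → (τ, y) ∈ Bset d n A →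
      (n : ℤ) ∣ (y - x) → x = y := by
    have key : ∀ τ : ZMod d, ∀ x y : ℤ, (τ, x) ∈ Bset d n A → (τ, y) ∈ Bset d n A →
        (n : ℤ) ∣ (y - x) → x < y → False := by
      intro τ x y hx hy ⟨t, ht⟩ hlt
      have hn' : (0 : ℤ) < n := by exact_mod_cast hn
      have ht1 : 1 ≤ t := by nlinarith
      set s : ℕ := (t - 1).toNat with hs
      have hst : (s : ℤ) = t - 1 := Int.toNat_of_nonneg (by omega)
      have hmem : (τ, x + (s : ℤ) * n) ∈ A := haddn (τ, x) hx.1 s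
      have hxy : x + (s : ℤ) * n = y - n := by rw [hst]; nlinarith [ht]
      rw [hxy] at hmem
      exact hy.2 hmem
    intro τ x y hx hy hdvd
    rcases lt_trichotomy x y with h | h | h
    · exact absurd (key τ x y hx hy hdvd h) (by simp)
    · exact h
    · exact absurd (key τ y x hy hx (by obtain ⟨t, ht⟩ := hdvd; exact ⟨-t, by linarith⟩) h) (by simp)
  -- all b i are in B
  have hbmem : ∀ i, b i ∈ Bset d n A := by
    intro i
    cases i with
    | zero => exact hb0mem
    | succ i => exact (hrec i).1
  -- class of b i
  have hcls : ∀ i, (b i).1 = ((i : ℕ) : ZMod d) := by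
    intro i
    induction i with
    | zero => simpa using hb0cls
    | succ i ih =>
      obtain ⟨c, hc⟩ := (hrec i).2
      rw [hc]
      simp [ih]
  -- step-back injectivity
  have hstep : ∀ p q : ℕ, b (p + 1) = b (q + 1) → b p = b q := by
    intro p q h
    obtain ⟨c, hc⟩ := (hrec p).2
    obtain ⟨c', hc'⟩ := (hrec q).2
    have h1 : (b p).1 = (b q).1 := by
      have := congrArg Prod.fst h
      rw [hc, hc'] at this
      simpa using this
    have h2 : (b p).2 = (b q).2 := by
      refine huniq (b p).1 (b p).2 (b q).2 ?_ ?_ ?_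
      · simpa using hbmem p
      · rw [h1]; simpa using hbmem q
      · have := congrArg Prod.snd h
        rw [hc, hc'] at this
        simp only at this
        rw [h1] at this
        exact ⟨(c' : ℤ) - c, by linarith⟩
    exact Prod.ext h1 h2
  have hback : ∀ t p q : ℕ, b (p + t) = b (q + t) → b p = b q := by
    intro t
    induction t with
    | zero => intro p q h; simpa using h
    | succ t ih =>
      intro p q h
      have : b ((p + 1) + t) = b ((q + 1) + t) := by
        have e1 : (p + 1) + t = p + (t + 1) := by omega
        have e2 : (q + 1) + t = q + (t + 1) := by omega
        rw [e1, e2]; exact h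
      exact hstep p q (ih _ _ this)
  -- sum over a full period of classes
  have hsum_d : ∑ i ∈ Finset.range d, mfun ((i : ℕ) : ZMod d) = (m : ℤ) := by
    rw [← hsum]
    refine Finset.sum_nbij' (fun i => ((i : ℕ) : ZMod d)) (fun τ => τ.val) ?_ ?_ ?_ ?_ ?_
    · intro a _; exact Finset.mem_univ _
    · intro τ _; exact Finset.mem_range.2 (ZMod.val_lt τ)
    · intro a ha; exact ZMod.val_cast_of_lt (Finset.mem_range.1 ha)
    · intro τ _; simp [ZMod.natCast_val, ZMod.cast_id]
    · intro a _; rfl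
  have hsumd : ∀ q : ℕ, ∑ i ∈ Finset.range (d * q), mfun ((i : ℕ) : ZMod d) = (q : ℤ) * m := by
    intro q
    induction q with
    | zero => simp
    | succ q ih =>
      have e : d * (q + 1) = d * q + d := by ring
      rw [e, Finset.sum_range_add, ih]
      have e2 : ∀ x ∈ Finset.range d, mfun ((d * q + x : ℕ) : ZMod d)
          = mfun ((x : ℕ) : ZMod d) := by
        intro x _
        congr 1
        push_cast
        simp
      rw [Finset.sum_congr rfl e2, hsum_d]
      push_cast
      ring
  -- value telescoping
  have hval : ∀ k : ℕ, ∃ C : ℕ, (b k).2 + (C : ℤ) * n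
      = (b 0).2 + ∑ i ∈ Finset.range k, mfun ((i : ℕ) : ZMod d) := by
    intro k
    induction k with
    | zero => exact ⟨0, by simp⟩
    | succ k ih =>
      obtain ⟨C, hC⟩ := ih
      obtain ⟨c, hc⟩ := (hrec k).2
      refine ⟨C + c, ?_⟩
      have h2 : (b (k + 1)).2 = (b k).2 + mfun (b k).1 - (c : ℤ) * n := by rw [hc]
      rw [Finset.sum_range_succ, h2, hcls k]
      push_cast
      push_cast at hC
      linarith
  -- core: a nontrivial return forces k ≥ d*n
  have hcore : ∀ k : ℕ, 0 < k → b k = b 0 → d * n ≤ k := by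
    intro k hk hbk
    have hdvd : d ∣ k := by
      have h1 : ((k : ℕ) : ZMod d) = 0 := by
        rw [← hcls k, hbk, hb0cls]
      exact (ZMod.natCast_eq_zero_iff k d).1 h1
    obtain ⟨q, hq⟩ := hdvd
    obtain ⟨C, hC⟩ := hval k
    rw [hbk, hq, hsumd q] at hC
    have hCn : C * n = q * m := by
      have : (C : ℤ) * n = (q : ℤ) * m := by linarith
      exact_mod_cast this
    have hq0 : 0 < q := by
      rcases Nat.eq_zero_or_pos q with h | h
      · subst h; simp at hq; omega
      · exact h
    have hnq : n ∣ q := by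
      have h1 : n ∣ q * m := ⟨C, by linarith [hCn]⟩
      exact (Nat.Coprime.dvd_of_dvd_mul_right (hmn.symm) h1)
    have : n ≤ q := Nat.le_of_dvd hq0 hnq
    calc d * n ≤ d * q := Nat.mul_le_mul_left d this
    _ = k := hq.symm
  -- pairwise distinctness
  have hinj : ∀ i j : ℕ, i < d * n → j < d * n → b i = b j → i = j := by
    have key : ∀ i j : ℕ, i < j → j < d * n → b i = b j → False := by
      intro i j hij hj h
      have h' : b (0 + i) = b ((j - i) + i) := by
        simpa [Nat.sub_add_cancel hij.le] using h
      have h0 : b 0 = b (j - i) := hback i 0 (j - i) h'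
      have := hcore (j - i) (by omega) h0.symm
      omega
    intro i j hi hj h
    rcases lt_trichotomy i j with hlt | he | hgt
    · exact absurd (key i j hlt hj h) (by simp)
    · exact he
    · exact absurd (key j i hgt hi h.symm) (by simp)
  have hSeq : {p : ZMod d × ℤ | ∃ i : ℕ, i < d * n ∧ b i = p} = Bset d n A := by
    have hinjψ : Set.InjOn (fun p : ZMod d × ℤ => (p.1, (p.2 : ZMod n)))
        (Bset d n A) := by
      intro p hp q hq hpq
      have hpq : (p.1, (p.2 : ZMod n)) = (q.1, (q.2 : ZMod n)) := hpq
      have h1 : p.1 = q.1 := (Prod.ext_iff.1 hpq).1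
      have h2 : ((p.2 : ZMod n)) = (q.2 : ZMod n) := (Prod.ext_iff.1 hpq).2
      have hdvd : (n : ℤ) ∣ (q.2 - p.2) := by
        rcases (ZMod.intCast_eq_intCast_iff' p.2 q.2 n).1 h2 with h
        exact Int.ModEq.dvd h
      have := huniq p.1 p.2 q.2 (by simpa using hp) (by rw [h1]; simpa using hq) hdvd
      exact Prod.ext h1 this
    have hBfin : (Bset d n A).Finite := by
      refine Set.Finite.of_finite_image ?_ hinjψ
      exact Set.toFinite _
    have hBcard : (Bset d n A).ncard ≤ d * n := by
      calc (Bset d n A).ncard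
          = ((fun p : ZMod d × ℤ => (p.1, (p.2 : ZMod n))) '' Bset d n A).ncard :=
            (Set.ncard_image_of_injOn hinjψ).symm
        _ ≤ (Set.univ : Set (ZMod d × ZMod n)).ncard :=
            Set.ncard_le_ncard (Set.subset_univ _) Set.finite_univ
        _ = d * n := by
            rw [Set.ncard_univ, Nat.card_eq_fintype_card, Fintype.card_prod,
              ZMod.card, ZMod.card]
    have hSimg : {p : ZMod d × ℤ | ∃ i : ℕ, i < d * n ∧ b i = p}
        = b '' {i : ℕ | i < d * n} := by
      ext p
      simp [Set.mem_image, eq_comm]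
    have hScard : {p : ZMod d × ℤ | ∃ i : ℕ, i < d * n ∧ b i = p}.ncard = d * n := by
      have hIset : {i : ℕ | i < d * n} = ↑(Finset.range (d * n)) := by
        ext i; simp
      rw [hSimg, hIset,
        Set.ncard_image_of_injOn
          (fun i hi j hj h => hinj i j (by simpa using hi) (by simpa using hj) h),
        Set.ncard_coe_finset, Finset.card_range]
    refine Set.eq_of_subset_of_ncard_le ?_ ?_ hBfin
    · rintro p ⟨i, _, rfl⟩
      exact hbmem i
    · rw [hScard]; exact hBcard
  refine ⟨hinj, hSeq, ?_⟩
  · -- b (d*n) = b 0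
    have hmem : b (d * n) ∈ Bset d n A := hbmem _
    rw [← hSeq] at hmem
    obtain ⟨j, hj, hbj⟩ := hmem
    rcases Nat.eq_zero_or_pos j with h0 | hpos
    · subst h0; exact hbj.symm
    · exfalso
      have h' : b (0 + j) = b ((d * n - j) + j) := by
        simpa [Nat.sub_add_cancel hj.le] using hbj
      have h0 : b 0 = b (d * n - j) := hback j 0 (d * n - j) h'
      have := hcore (d * n - j) (by omega) h0.symm
      omega
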